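/- arXiv:1805.03521 — 3 statements merged into one kernel-verified Lean document; each statement's English description precedes it below -/
import Mathlib

section
/- For all natural numbers n and p, the p-th derivative of T_n evaluated at x = ±1 equals (±1)^{n+p} · ∏_{k=0}^{p−1} (n² − k²)/(2k+1). -/
open Polynomial Polynomial.Chebyshev

private lemma cheb_ode (n : ℤ) :
    (1 - X ^ 2) * derivative (derivative (T ℝ n)) =
      X * derivative (T ℝ n) - (n : ℝ[X]) ^ 2 * T ℝ n := by
  have hc : (1 - X ^ 2 : ℝ[X]) ≠ 0 := by
    intro h
    have := congrArg (Polynomial.eval 0) h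
    simp at this
  apply mul_left_cancel₀ hc
  have h1 : (1 - X ^ 2) * derivative (T ℝ n) = (n : ℝ[X]) * (T ℝ (n - 1) - X * T ℝ n) := by
    have := one_sub_X_sq_mul_derivative_T_eq_poly_in_T (R := ℝ) (n - 1)
    simpa using this
  have h2 : (1 - X ^ 2) * derivative (T ℝ (n - 1)) =
      ((n : ℝ[X]) - 1) * (T ℝ (n - 2) - X * T ℝ (n - 1)) := by
    have := one_sub_X_sq_mul_derivative_T_eq_poly_in_T (R := ℝ) (n - 2)
    have e : n - 2 + 1 = n - 1 := by ring
    rw [e] at this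
    convert this using 2
    push_cast
    ring
  have h3 := congrArg derivative h1
  simp only [derivative_mul, derivative_sub, derivative_one, derivative_X_pow, derivative_X,
    derivative_intCast, C_eq_natCast, Nat.cast_ofNat, map_ofNat] at h3
  have h4 := T_sub_two ℝ n
  linear_combination (norm := (push_cast; ring_nf))
    (1 - (X : ℝ[X]) ^ 2) * h3 + (n : ℝ[X]) * h2 + (1 - (n : ℝ[X])) * X * h1 +
      (n : ℝ[X]) * ((n : ℝ[X]) - 1) * h4

private lemma cheb_rec (n : ℤ) (p : ℕ) :
    (1 - X ^ 2) * derivative^[p + 2] (T ℝ n) =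
      (2 * (p : ℝ[X]) + 1) * X * derivative^[p + 1] (T ℝ n) +
        ((p : ℝ[X]) ^ 2 - (n : ℝ[X]) ^ 2) * derivative^[p] (T ℝ n) := by
  induction p with
  | zero =>
    simpa [sub_eq_add_neg] using cheb_ode n
  | succ p ih =>
    have d := congrArg derivative ih
    simp only [derivative_mul, derivative_add, derivative_sub, derivative_one, derivative_X_pow,
      derivative_X, derivative_natCast, derivative_intCast, derivative_ofNat, derivative_pow,
      C_eq_natCast, Nat.cast_ofNat, map_ofNat, mul_zero, zero_mul, add_zero, zero_add] at d
    have e1 : ∀ q : ℕ, derivative^[q + 1] (T ℝ n) = derivative (derivative^[q] (T ℝ n)) := by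
      intro q
      rw [Function.iterate_succ_apply']
    rw [e1 (p + 2), e1 (p + 1), e1 p] at *
    linear_combination (norm := (push_cast; ring_nf)) d

private lemma cheb_eval_step (n : ℤ) (p : ℕ) (s : ℝ) (hs : s = 1 ∨ s = -1) :
    (derivative^[p + 1] (T ℝ n)).eval s =
      s * (((n : ℝ) ^ 2 - (p : ℝ) ^ 2) / (2 * p + 1)) * (derivative^[p] (T ℝ n)).eval s := by
  have hsq : s ^ 2 = 1 := by rcases hs with h | h <;> simp [h]
  have h := congrArg (Polynomial.eval s) (cheb_rec n p)
  simp only [eval_mul, eval_add, eval_sub, eval_one, eval_pow, eval_X, eval_natCast,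
    eval_intCast, eval_ofNat] at h
  rw [hsq] at h
  have hp : (2 * (p : ℝ) + 1) ≠ 0 := by positivity
  simp only [Function.iterate_succ_apply'] at h ⊢
  field_simp
  rcases hs with h1 | h1 <;> subst h1 <;> linarith [h]

private lemma T_eval_pm_one (s : ℝ) (hs : s = 1 ∨ s = -1) :
    ∀ n : ℕ, (T ℝ n).eval s = s ^ n := by
  have hsq : s ^ 2 = 1 := by rcases hs with h | h <;> simp [h]
  intro n
  induction n using Nat.strong_induction_on with
  | _ n ih =>
    match n with
    | 0 => simp [T_zero]
    | 1 => simp [T_one]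
    | (m + 2) =>
      have h1 := ih m (by omega)
      have h2 := ih (m + 1) (by omega)
      have e : ((m : ℤ) + 1 + 1) = ((m : ℕ) + 2 : ℕ) := by push_cast; ring
      have h3 := T_add_two ℝ (m : ℤ)
      rw [show ((m : ℤ) + 2) = (((m + 2 : ℕ) : ℤ)) by push_cast; ring,
        show ((m : ℤ) + 1) = (((m + 1 : ℕ) : ℤ)) by push_cast; ring] at h3
      have := congrArg (Polynomial.eval s) h3
      simp only [eval_sub, eval_mul, eval_ofNat, eval_X, h1, h2] at this
      rw [this]
      have : s ^ (m + 2) = s ^ m := by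
        rw [pow_add, hsq, mul_one]
      rw [this]
      rcases hs with h | h <;> subst h <;> simp [pow_succ] <;> ring

theorem chebyshev_iterated_deriv_endpoint (n p : ℕ) (s : ℝ) (hs : s = 1 ∨ s = -1) :
    ((Polynomial.derivative)^[p] (T ℝ n)).eval s =
      s ^ (n + p) * ∏ k ∈ Finset.range p, (((n : ℝ) ^ 2 - (k : ℝ) ^ 2) / (2 * k + 1)) := by
  induction p with
  | zero =>
    simpa using T_eval_pm_one s hs n
  | succ p ih =>
    rw [cheb_eval_step (n : ℤ) p s hs, ih, Finset.prod_range_succ]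
    have : s ^ (n + (p + 1)) = s * s ^ (n + p) := by ring
    rw [this]
    push_cast
    ring
end

section
/- The functions T_kl defined by T_kl(x) = ∫_{−1}^{x} T_k(x−τ−1)·T_l(τ) dτ ± ∫_x^1 T_k(x−τ+1)·T_l(τ) dτ (same choice of sign on both occurrences, i.e. T_kl = T_kl^− ± T_kl^+) are symmetric in their indices: T_lk(x) = T_kl(x) for all x ∈ [−1,1]. -/
open Polynomial Polynomial.Chebyshev

noncomputable def Tminus (k l : ℕ) (x : ℝ) : ℝ :=
  ∫ τ in (-1 : ℝ)..x, (T ℝ k).eval (x - τ - 1) * (T ℝ l).eval τ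

noncomputable def Tplus (k l : ℕ) (x : ℝ) : ℝ :=
  -∫ τ in x..(1 : ℝ), (T ℝ k).eval (x - τ + 1) * (T ℝ l).eval τ

lemma Tminus_symm (k l : ℕ) (x : ℝ) : Tminus k l x = Tminus l k x := by
  unfold Tminus
  have h := intervalIntegral.integral_comp_sub_left
    (f := fun σ => (T ℝ k).eval σ * (T ℝ l).eval (x - 1 - σ)) (a := (-1 : ℝ)) (b := x) (x - 1)
  have e1 : x - 1 - x = -1 := by ring
  have e2 : x - 1 - (-1 : ℝ) = x := by ring
  rw [e1, e2] at h
  calc ∫ τ in (-1 : ℝ)..x, (T ℝ k).eval (x - τ - 1) * (T ℝ l).eval τ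
      = ∫ τ in (-1 : ℝ)..x, (T ℝ k).eval (x - 1 - τ) * (T ℝ l).eval (x - 1 - (x - 1 - τ)) := by
        apply intervalIntegral.integral_congr
        intro τ _
        congr 1 <;> ring_nf
    _ = ∫ σ in (-1 : ℝ)..x, (T ℝ k).eval σ * (T ℝ l).eval (x - 1 - σ) := h
    _ = ∫ τ in (-1 : ℝ)..x, (T ℝ l).eval (x - τ - 1) * (T ℝ k).eval τ := by
        apply intervalIntegral.integral_congr
        intro τ _
        dsimp only
        rw [mul_comm]
        congr 2
        ring

lemma Tplus_symm (k l : ℕ) (x : ℝ) : Tplus k l x = Tplus l k x := by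
  unfold Tplus
  congr 1
  have h := intervalIntegral.integral_comp_sub_left
    (f := fun σ => (T ℝ k).eval σ * (T ℝ l).eval (x + 1 - σ)) (a := x) (b := (1 : ℝ)) (x + 1)
  have e1 : x + 1 - 1 = x := by ring
  have e2 : x + 1 - x = (1 : ℝ) := by ring
  rw [e1, e2] at h
  calc ∫ τ in x..(1 : ℝ), (T ℝ k).eval (x - τ + 1) * (T ℝ l).eval τ
      = ∫ τ in x..(1 : ℝ), (T ℝ k).eval (x + 1 - τ) * (T ℝ l).eval (x + 1 - (x + 1 - τ)) := by
        apply intervalIntegral.integral_congr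
        intro τ _
        congr 1 <;> ring_nf
    _ = ∫ σ in x..(1 : ℝ), (T ℝ k).eval σ * (T ℝ l).eval (x + 1 - σ) := h
    _ = ∫ τ in x..(1 : ℝ), (T ℝ l).eval (x - τ + 1) * (T ℝ k).eval τ := by
        apply intervalIntegral.integral_congr
        intro τ _
        dsimp only
        rw [mul_comm]
        congr 2
        ring

theorem Tkl_symm (ε : ℝ) (hε : ε = 1 ∨ ε = -1) (k l : ℕ) (x : ℝ)
    (hx : x ∈ Set.Icc (-1 : ℝ) 1) :
    Tminus l k x + ε * Tplus l k x = Tminus k l x + ε * Tplus k l x := by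
  rw [Tminus_symm l k, Tplus_symm l k]
end

section
/- The convolutions T_{k,l}^± satisfy the recurrence T_{k+1,l}^±(x) = 2x·T_{k,l}^±(x) − T_{k,l+1}^±(x) − T_{k,|l−1|}^±(x) ± 2·T_{k,l}^±(x) − T_{|k−1|,l}^±(x) for k ≥ 1. -/
open Polynomial Polynomial.Chebyshev

private lemma key_pt (k l : ℤ) (y τ : ℝ) :
    (T ℝ (k + 1)).eval y * (T ℝ l).eval τ =
      2 * (y + τ) * ((T ℝ k).eval y * (T ℝ l).eval τ)
        - (T ℝ k).eval y * (T ℝ (l + 1)).eval τ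
        - (T ℝ k).eval y * (T ℝ (l - 1)).eval τ
        - (T ℝ (k - 1)).eval y * (T ℝ l).eval τ := by
  have h1 : (T ℝ (k + 1)).eval y = 2 * y * (T ℝ k).eval y - (T ℝ (k - 1)).eval y := by
    have := congrArg (eval y) (T_add_one ℝ k)
    simpa using this
  have h2 : 2 * τ * (T ℝ l).eval τ = (T ℝ (l + 1)).eval τ + (T ℝ (l - 1)).eval τ := by
    have := congrArg (eval τ) (T_mul_T ℝ 1 l)
    rw [show (1 : ℤ) - l = -(l - 1) by ring, T_neg, show (1 : ℤ) + l = l + 1 by ring] at this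
    simpa using this
  linear_combination (T ℝ l).eval τ * h1 - (T ℝ k).eval y * h2

private lemma ii (p q : ℝ[X]) (c a b : ℝ) :
    IntervalIntegrable (fun τ => p.eval (c - τ) * q.eval τ)
      MeasureTheory.volume a b := by
  apply Continuous.intervalIntegrable
  exact (p.continuous.comp (by continuity)).mul q.continuous

private lemma key_int (k l : ℤ) (x c a b : ℝ) :
    (∫ τ in a..b, (T ℝ (k + 1)).eval (x - τ + c) * (T ℝ l).eval τ) =
      (2 * x + 2 * c) * (∫ τ in a..b, (T ℝ k).eval (x - τ + c) * (T ℝ l).eval τ)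
        - (∫ τ in a..b, (T ℝ k).eval (x - τ + c) * (T ℝ (l + 1)).eval τ)
        - (∫ τ in a..b, (T ℝ k).eval (x - τ + c) * (T ℝ (l - 1)).eval τ)
        - ∫ τ in a..b, (T ℝ (k - 1)).eval (x - τ + c) * (T ℝ l).eval τ := by
  have e : ∀ τ : ℝ, (T ℝ (k + 1)).eval (x - τ + c) * (T ℝ l).eval τ =
      (2 * x + 2 * c) * ((T ℝ k).eval (x - τ + c) * (T ℝ l).eval τ)
        - (T ℝ k).eval (x - τ + c) * (T ℝ (l + 1)).eval τ
        - (T ℝ k).eval (x - τ + c) * (T ℝ (l - 1)).eval τ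
        - (T ℝ (k - 1)).eval (x - τ + c) * (T ℝ l).eval τ := fun τ => by
    have h := key_pt k l (x - τ + c) τ
    linear_combination h
  simp_rw [e]
  have h1 := ii (T ℝ k) (T ℝ l) (x + c) a b
  have h2 := ii (T ℝ k) (T ℝ (l + 1)) (x + c) a b
  have h3 := ii (T ℝ k) (T ℝ (l - 1)) (x + c) a b
  have h4 := ii (T ℝ (k - 1)) (T ℝ l) (x + c) a b
  simp only [show ∀ τ : ℝ, x - τ + c = (x + c) - τ from fun τ => by ring]
  rw [intervalIntegral.integral_sub (((h1.const_mul _).sub h2).sub h3) h4,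
    intervalIntegral.integral_sub ((h1.const_mul _).sub h2) h3,
    intervalIntegral.integral_sub (h1.const_mul _) h2,
    intervalIntegral.integral_const_mul]

theorem Tkl_recurrence (k l : ℕ) (hk : 1 ≤ k) (x : ℝ) :
    (Tminus (k + 1) l x =
      2 * x * Tminus k l x - Tminus k (l + 1) x - Tminus k (((l : ℤ) - 1).natAbs) x
        - 2 * Tminus k l x - Tminus (((k : ℤ) - 1).natAbs) l x) ∧
    (Tplus (k + 1) l x =
      2 * x * Tplus k l x - Tplus k (l + 1) x - Tplus k (((l : ℤ) - 1).natAbs) x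
        + 2 * Tplus k l x - Tplus (((k : ℤ) - 1).natAbs) l x) := by
  unfold Tminus Tplus
  simp only [T_natAbs, Nat.cast_add, Nat.cast_one]
  constructor
  · have h := key_int (k : ℤ) (l : ℤ) x (-1) (-1) x
    simp only [show ∀ τ : ℝ, x - τ + (-1 : ℝ) = x - τ - 1 from fun τ => by ring] at h
    rw [h]; ring
  · have h := key_int (k : ℤ) (l : ℤ) x 1 x 1
    rw [h]; ring
end
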